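/- If x,y ∈ X and a,c are multisets on X with C(a) = C(c), then |d_E(a + e_x, c + e_y) − d_E(a,c)| ≤ d(x,y). -/

import Mathlib

/-- `ρ` is a metric: zero iff equal, symmetric, triangle inequality. -/
def IsMetric {α : Type*} (ρ : α → α → ℝ) : Prop :=
  (∀ x y, ρ x y = 0 ↔ x = y) ∧ (∀ x y, ρ x y = ρ y x) ∧
    ∀ x y z, ρ x z ≤ ρ x y + ρ y z

def IsCauchyWith {α : Type*} (ρ : α → α → ℝ) (S : ℕ → α) : Prop :=
  ∀ ε : ℝ, 0 < ε → ∃ N : ℕ, ∀ m ≥ N, ∀ n ≥ N, ρ (S m) (S n) < ε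

def TendsToWith {α : Type*} (ρ : α → α → ℝ) (S : ℕ → α) (l : α) : Prop :=
  ∀ ε : ℝ, 0 < ε → ∃ N : ℕ, ∀ n ≥ N, ρ (S n) l < ε

def IsCompleteWith {α : Type*} (ρ : α → α → ℝ) : Prop :=
  ∀ S : ℕ → α, IsCauchyWith ρ S → ∃ l, TendsToWith ρ S l

/-- the topology generated by the open balls of `ρ` -/
def topOf {α : Type*} (ρ : α → α → ℝ) : TopologicalSpace α :=
  TopologicalSpace.generateFrom {s | ∃ (x : α) (ε : ℝ), s = {y | ρ x y < ε}}

/-- `sup d`, the supremum of all distances in `X` -/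
noncomputable def supD (X : Type*) [MetricSpace X] : ℝ :=
  sSup {r : ℝ | ∃ x y : X, dist x y = r}

/-- The multiset distance `d_E`: enumerate `a` and `c` with multiplicity in all possible
orders; the shorter enumeration is matched against an initial part of the other, taking
the sum of the distances of matched pairs plus the notional part `M * |C(c) - C(a)|`;
`d_E` is the least such value. -/
noncomputable def dE {X : Type*} [MetricSpace X] (M : ℝ) (a c : Multiset X) : ℝ :=
  sInf {r : ℝ | ∃ la lc : List X, (la : Multiset X) = a ∧ (lc : Multiset X) = c ∧
    r = (List.zipWith dist la lc).sum + M * |(c.card : ℝ) - (a.card : ℝ)|}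

/-- `d_Em`, the mean version of `d_E` (equal to `0` on the pair of empty multisets). -/
noncomputable def dEm {X : Type*} [MetricSpace X] (M : ℝ) (a c : Multiset X) : ℝ :=
  dE M a c / (max a.card c.card : ℕ)

private lemma coe_mid {α : Type*} (A B : List α) (u : α) :
    (↑(A ++ u :: B) : Multiset α) = ↑(A ++ B) + {u} := by
  calc (↑(A ++ u :: B) : Multiset α)
      = ↑(u :: (A ++ B)) := Multiset.coe_eq_coe.mpr List.perm_middle
    _ = u ::ₘ ↑(A ++ B) := (Multiset.cons_coe _ _).symm
    _ = {u} + ↑(A ++ B) := (Multiset.singleton_add _ _).symm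
    _ = ↑(A ++ B) + {u} := add_comm _ _

private lemma zip_sum_nonneg {X : Type*} [MetricSpace X] :
    ∀ (la lc : List X), 0 ≤ (List.zipWith dist la lc).sum := by
  intro la
  induction la with
  | nil => intro lc; simp
  | cons h t ih =>
    intro lc
    cases lc with
    | nil => simp
    | cons h' t' =>
      simp only [List.zipWith_cons_cons, List.sum_cons]
      have := ih t'
      have := dist_nonneg (x := h) (y := h')
      linarith

private lemma pairSum {X : Type*} [MetricSpace X] (l : List (X × X)) :
    List.zipWith dist (l.map Prod.fst) (l.map Prod.snd)
      = l.map (fun p => dist p.1 p.2) := by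
  rw [List.zipWith_map, List.zipWith_self]

/-- Key combinatorial lemma: drop one `x` from the firsts and one `y` from the
seconds, increasing the pairing cost by at most `dist x y`. -/
private lemma key {X : Type*} [MetricSpace X] (x y : X) (a c : Multiset X)
    (l : List (X × X))
    (ha : (↑(l.map Prod.fst) : Multiset X) = a + {x})
    (hc : (↑(l.map Prod.snd) : Multiset X) = c + {y}) :
    ∃ l' : List (X × X), (↑(l'.map Prod.fst) : Multiset X) = a ∧
      (↑(l'.map Prod.snd) : Multiset X) = c ∧
      (l'.map (fun p => dist p.1 p.2)).sum
        ≤ (l.map (fun p => dist p.1 p.2)).sum + dist x y := by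
  have hx : x ∈ l.map Prod.fst := by
    rw [← Multiset.mem_coe, ha]; simp
  obtain ⟨p, hp, hpx⟩ := List.mem_map.1 hx
  obtain ⟨x', u⟩ := p
  dsimp at hpx
  replace hpx := hpx.symm
  subst hpx
  obtain ⟨l₁, l₂, rfl⟩ := List.append_of_mem hp
  have ham : (↑((l₁ ++ l₂).map Prod.fst) : Multiset X) = a := by
    have h1 : (↑((l₁ ++ l₂).map Prod.fst) : Multiset X) + {x} = a + {x} := by
      rw [← ha]
      simp only [List.map_append, List.map_cons]
      exact (coe_mid _ _ _).symm
    exact add_right_cancel h1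
  have hcm : (↑((l₁ ++ l₂).map Prod.snd) : Multiset X) + {u} = c + {y} := by
    rw [← hc]
    simp only [List.map_append, List.map_cons]
    exact (coe_mid _ _ _).symm
  have hsuml : ((l₁ ++ (x, u) :: l₂).map (fun p => dist p.1 p.2)).sum
      = ((l₁ ++ l₂).map (fun p => dist p.1 p.2)).sum + dist x u := by
    simp; ring
  by_cases huy : u = y
  · rw [huy] at hcm
    refine ⟨l₁ ++ l₂, ham, add_right_cancel hcm, ?_⟩
    rw [hsuml]
    have := dist_nonneg (x := x) (y := u)
    have := dist_nonneg (x := x) (y := y)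
    linarith
  · have hy : y ∈ (l₁ ++ l₂).map Prod.snd := by
      rw [← Multiset.mem_coe]
      have : y ∈ (↑((l₁ ++ l₂).map Prod.snd) : Multiset X) + {u} := by
        rw [hcm]; simp
      rcases Multiset.mem_add.1 this with h | h
      · exact h
      · simp at h; exact absurd h.symm huy
    obtain ⟨q, hq, hqy⟩ := List.mem_map.1 hy
    obtain ⟨v, y'⟩ := q
    dsimp at hqy
    replace hqy := hqy.symm
    subst hqy
    obtain ⟨m₁, m₂, hm⟩ := List.append_of_mem hq
    refine ⟨m₁ ++ (v, u) :: m₂, ?_, ?_, ?_⟩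
    · rw [← ham, hm]
      simp only [List.map_append, List.map_cons, coe_mid]
    · have h2 : (↑((m₁ ++ (v, u) :: m₂).map Prod.snd) : Multiset X) + {y}
          = c + {y} := by
        rw [← hcm, hm]
        simp only [List.map_append, List.map_cons, coe_mid]
        abel
      exact add_right_cancel h2
    · rw [hsuml, hm]
      have htri : dist v u ≤ dist v y + dist y x + dist x u := dist_triangle4 v y x u
      have hcomm : dist y x = dist x y := dist_comm y x
      simp only [List.map_append, List.map_cons, List.sum_append, List.sum_cons]
      linarith

private lemma dE_nonempty_bdd {X : Type*} [MetricSpace X] (M : ℝ) (hM : 0 ≤ M)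
    (a c : Multiset X) :
    ({r : ℝ | ∃ la lc : List X, (la : Multiset X) = a ∧ (lc : Multiset X) = c ∧
      r = (List.zipWith dist la lc).sum + M * |(c.card : ℝ) - (a.card : ℝ)|}).Nonempty ∧
    BddBelow {r : ℝ | ∃ la lc : List X, (la : Multiset X) = a ∧ (lc : Multiset X) = c ∧
      r = (List.zipWith dist la lc).sum + M * |(c.card : ℝ) - (a.card : ℝ)|} := by
  constructor
  · exact ⟨_, a.toList, c.toList, a.coe_toList, c.coe_toList, rfl⟩
  · refine ⟨0, ?_⟩
    rintro r ⟨la, lc, -, -, rfl⟩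
    have h1 : 0 ≤ (List.zipWith dist la lc).sum := zip_sum_nonneg la lc
    have h2 : 0 ≤ M * |(Multiset.card c : ℝ) - (Multiset.card a : ℝ)| :=
      mul_nonneg hM (abs_nonneg _)
    linarith

/-- If `C(a) = C(c)` then adding one point to each of `a` and `c` changes `d_E`
by at most the distance between the two added points. -/
theorem stmt_5 {X : Type*} [MetricSpace X] [Nontrivial X] (M : ℝ) (hM : 0 < M)
    (x y : X) (a c : Multiset X) (hcard : a.card = c.card) :
    |dE M (a + {x}) (c + {y}) - dE M a c| ≤ dist x y := by
  obtain ⟨hne1, hbdd1⟩ := dE_nonempty_bdd M hM.le a c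
  obtain ⟨hne2, hbdd2⟩ := dE_nonempty_bdd M hM.le (a + {x}) (c + {y})
  have hcard2 : (a + {x}).card = (c + {y}).card := by simp [hcard]
  rw [abs_sub_le_iff]
  constructor
  · -- dE big ≤ dE small + dist x y
    have h : dE M (a + {x}) (c + {y}) - dist x y ≤ dE M a c := by
      apply le_csInf hne1
      rintro r ⟨la, lc, hla, hlc, rfl⟩
      have hlen : la.length = lc.length := by
        have := congrArg Multiset.card hla
        have := congrArg Multiset.card hlc
        simp [Multiset.coe_card] at *
        omega
      rw [sub_le_iff_le_add]
      have hmem : (List.zipWith dist (la ++ [x]) (lc ++ [y])).sum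
          + M * |((c + {y}).card : ℝ) - ((a + {x}).card : ℝ)|
          ∈ {r : ℝ | ∃ la lc : List X, (la : Multiset X) = a + {x} ∧
            (lc : Multiset X) = c + {y} ∧
            r = (List.zipWith dist la lc).sum
              + M * |((c + {y}).card : ℝ) - ((a + {x}).card : ℝ)|} := by
        refine ⟨la ++ [x], lc ++ [y], ?_, ?_, rfl⟩
        · rw [← hla]; simpa using coe_mid la [] x
        · rw [← hlc]; simpa using coe_mid lc [] y
      have h1 : dE M (a + {x}) (c + {y})
          ≤ (List.zipWith dist (la ++ [x]) (lc ++ [y])).sum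
            + M * |((c + {y}).card : ℝ) - ((a + {x}).card : ℝ)| :=
        csInf_le hbdd2 hmem
      rw [List.zipWith_append hlen] at h1
      simp only [List.zipWith_cons_cons, List.zipWith_nil_right, List.sum_append,
        List.sum_cons, List.sum_nil] at h1
      have hz1 : |((c + {y}).card : ℝ) - ((a + {x}).card : ℝ)| = 0 := by
        rw [hcard2, sub_self, abs_zero]
      have hz2 : |((c : Multiset X).card : ℝ) - ((a : Multiset X).card : ℝ)| = 0 := by
        rw [hcard, sub_self, abs_zero]
      rw [hz1] at h1
      rw [hz2]
      linarith
    linarith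
  · -- dE small ≤ dE big + dist x y
    have h : dE M a c - dist x y ≤ dE M (a + {x}) (c + {y}) := by
      apply le_csInf hne2
      rintro r ⟨la, lc, hla, hlc, rfl⟩
      have hlen : la.length = lc.length := by
        have := congrArg Multiset.card hla
        have := congrArg Multiset.card hlc
        simp [Multiset.coe_card, hcard] at *
        omega
      set l := la.zip lc with hl
      have hfst : l.map Prod.fst = la := List.map_fst_zip (l₁ := la) (l₂ := lc) (le_of_eq hlen)
      have hsnd : l.map Prod.snd = lc := List.map_snd_zip (l₁ := la) (l₂ := lc) (ge_of_eq hlen)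
      obtain ⟨l', hfa, hfc, hsum⟩ := key x y a c l
        (by rw [hfst]; exact hla) (by rw [hsnd]; exact hlc)
      have hmem : (List.zipWith dist (l'.map Prod.fst) (l'.map Prod.snd)).sum
          + M * |((c : Multiset X).card : ℝ) - ((a : Multiset X).card : ℝ)|
          ∈ {r : ℝ | ∃ la lc : List X, (la : Multiset X) = a ∧
            (lc : Multiset X) = c ∧
            r = (List.zipWith dist la lc).sum
              + M * |((c : Multiset X).card : ℝ) - ((a : Multiset X).card : ℝ)|} :=
        ⟨l'.map Prod.fst, l'.map Prod.snd, hfa, hfc, rfl⟩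
      have h1 : dE M a c
          ≤ (List.zipWith dist (l'.map Prod.fst) (l'.map Prod.snd)).sum
            + M * |((c : Multiset X).card : ℝ) - ((a : Multiset X).card : ℝ)| :=
        csInf_le hbdd1 hmem
      rw [pairSum] at h1
      have hz1 : |((c + {y}).card : ℝ) - ((a + {x}).card : ℝ)| = 0 := by
        rw [hcard2, sub_self, abs_zero]
      have hz2 : |((c : Multiset X).card : ℝ) - ((a : Multiset X).card : ℝ)| = 0 := by
        rw [hcard, sub_self, abs_zero]
      rw [hz2] at h1
      rw [hz1]
      have hzl : (List.zipWith dist la lc).sum = (l.map (fun p => dist p.1 p.2)).sum := by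
        conv_lhs => rw [← hfst, ← hsnd, pairSum]
      rw [hzl]
      linarith
    linarith
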